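/- Temporal Serial Dictator does not satisfy weak JR: there is an instance with T = 2 rounds in which a 1-cohesive (indeed 2-cohesive) group of n/2 voters with floor(2·(n/2)/n) = 1 receives satisfaction 0. -/

import Mathlib

open scoped Classical

noncomputable section

/-- A one-round approval profile: each of the `n` voters approves a finite set of
alternatives (alternatives are natural numbers). -/
abbrev Profile (n : ℕ) := Fin n → Finset ℕ

/-- An online temporal voting rule: given the round index `t` and the (infinite
sequence of) approval profiles, it returns the winning alternative of round `t`.
Online rules only look at rounds `0,…,t`. -/
abbrev VRule (n : ℕ) := ℕ → (ℕ → Profile n) → ℕ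

/-- Replace voter `i`'s approval set in round `t` by `S`, keeping everything else. -/
def updateRound {n : ℕ} (A : ℕ → Profile n) (t : ℕ) (i : Fin n) (S : Finset ℕ) :
    ℕ → Profile n :=
  fun s => if s = t then Function.update (A s) i S else A s

/-- A rule is online if the round-`t` winner only depends on rounds `0,…,t`. -/
def OnlineRule {n : ℕ} (R : VRule n) : Prop :=
  ∀ (t : ℕ) (A B : ℕ → Profile n), (∀ s, s ≤ t → A s = B s) → R t A = R t B

/-- Monotonicity: if `c` wins round `t`, adding `c` to any voter's round-`t`
approval set keeps `c` the round-`t` winner. -/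
def IsMonotone {n : ℕ} (R : VRule n) : Prop :=
  ∀ (A : ℕ → Profile n) (t : ℕ) (i : Fin n),
    R t (updateRound A t i (A t i ∪ {R t A})) = R t A

/-- Online independence of irrelevant alternatives: removing a non-winning
alternative `d` from any single voter's round-`t` approvals keeps the winner. -/
def OIIA {n : ℕ} (R : VRule n) : Prop :=
  ∀ (A : ℕ → Profile n) (t : ℕ) (i : Fin n) (d : ℕ), d ≠ R t A →
    R t (updateRound A t i ((A t i).erase d)) = R t A

/-- Online strategyproofness: fixing previous rounds and the other voters, no
misreport `S` by voter `i` in round `t` can turn the round-`t` winner from a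
(truthfully) unapproved alternative into an approved one. -/
def OSP {n : ℕ} (R : VRule n) : Prop :=
  ∀ (A : ℕ → Profile n) (t : ℕ) (i : Fin n) (S : Finset ℕ),
    R t (updateRound A t i S) ∈ A t i → R t A ∈ A t i

/-- `B` deviates from `A` only in voter `i`'s reports. -/
def Deviation {n : ℕ} (i : Fin n) (A B : ℕ → Profile n) : Prop :=
  ∀ (t : ℕ) (j : Fin n), j ≠ i → B t j = A t j

/-- Satisfaction of the group `G` over rounds `0,…,T-1`: the number of rounds in
which the winner under the reported profile `B` is approved (in the reference,
e.g. truthful, profile `A`) by some member of `G`. -/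
def satAgainst {n : ℕ} (R : VRule n) (B A : ℕ → Profile n) (T : ℕ)
    (G : Finset (Fin n)) : ℕ :=
  ((Finset.range T).filter fun t => ∃ i ∈ G, R t B ∈ A t i).card

/-- (Full) strategyproofness: no unilateral misreport strictly increases a
voter's total satisfaction, measured against their truthful approvals. -/
def SP {n : ℕ} (R : VRule n) : Prop :=
  ∀ (A B : ℕ → Profile n) (i : Fin n) (T : ℕ), Deviation i A B →
    satAgainst R B A T {i} ≤ satAgainst R A A T {i}

/-- `G` is `ℓ`-cohesive in the first `T` rounds of `A`: in some `ℓ` rounds all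
members of `G` approve a common alternative. -/
def Cohesive {n : ℕ} (A : ℕ → Profile n) (T : ℕ) (G : Finset (Fin n)) (ℓ : ℕ) : Prop :=
  ∃ Rs : Finset ℕ, Rs ⊆ Finset.range T ∧ Rs.card = ℓ ∧
    ∀ t ∈ Rs, ∃ c, ∀ i ∈ G, c ∈ A t i

/-- Justified representation. -/
def SatisfiesJR {n : ℕ} (R : VRule n) : Prop :=
  ∀ (A : ℕ → Profile n) (T : ℕ) (G : Finset (Fin n)) (ℓ : ℕ),
    Cohesive A T G ℓ → min 1 (ℓ * G.card / n) ≤ satAgainst R A A T G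

/-- Proportional justified representation. -/
def SatisfiesPJR {n : ℕ} (R : VRule n) : Prop :=
  ∀ (A : ℕ → Profile n) (T : ℕ) (G : Finset (Fin n)) (ℓ : ℕ),
    Cohesive A T G ℓ → ℓ * G.card / n ≤ satAgainst R A A T G

end
noncomputable section

/-- Temporal Serial Dictator: in round `t`, the winner is chosen (by the fixed
choice function `χ`) from the approval set of voter `σ(t mod n)`. -/
def tsd {n : ℕ} (hn : 0 < n) (σ : Equiv.Perm (Fin n)) (χ : Finset ℕ → ℕ) : VRule n :=
  fun t A => χ (A t (σ ⟨t % n, Nat.mod_lt t hn⟩))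

end
/-- Temporal Serial Dictator does not satisfy weak JR: for even
`n ≥ 4` (identity permutation) there is a `T = 2` instance with a `2`-cohesive
group of `n/2` voters whose JR bound is `1` but whose satisfaction is `0`. -/
theorem tsd_fails_wJR (n : ℕ) (hn : 4 ≤ n) (heven : n % 2 = 0)
    (χ : Finset ℕ → ℕ) (hχ : ∀ S : Finset ℕ, S.Nonempty → χ S ∈ S) :
    ∃ (A : ℕ → Profile n) (G : Finset (Fin n)),
      (∀ t i, (A t i).Nonempty) ∧ G.card = n / 2 ∧ Cohesive A 2 G 2 ∧
      2 * G.card / n = 1 ∧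
      satAgainst (tsd (show 0 < n by omega) (Equiv.refl (Fin n)) χ) A A 2 G = 0 := by
  have hG : (Finset.univ.filter (fun i : Fin n => n / 2 ≤ (i : ℕ))).card = n / 2 := by
    have he : (Finset.univ.filter (fun i : Fin n => n / 2 ≤ (i : ℕ)))
        = Finset.Ici (⟨n / 2, by omega⟩ : Fin n) := by
      ext x
      simp [Fin.le_def]
    rw [he, Fin.card_Ici]
    simp only [Fin.val_mk]
    omega
  refine ⟨fun _ i => if (i : ℕ) < n / 2 then {0} else {1},
    Finset.univ.filter (fun i : Fin n => n / 2 ≤ (i : ℕ)), ?_, hG, ?_, ?_, ?_⟩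
  · intro t i
    by_cases h : (i : ℕ) < n / 2 <;> simp [h]
  · refine ⟨{0, 1}, by simp [Finset.insert_subset_iff], by simp, ?_⟩
    intro t ht
    refine ⟨1, ?_⟩
    intro i hi
    simp only [Finset.mem_filter] at hi
    simp [if_neg (by omega : ¬ ((i:ℕ) < n / 2))]
  · rw [hG, show 2 * (n / 2) = n by omega, Nat.div_self (by omega : 0 < n)]
  · rw [satAgainst, Finset.card_eq_zero, Finset.filter_eq_empty_iff]
    intro t ht
    rintro ⟨i, hi, hwin⟩
    simp only [Finset.mem_filter] at hi
    simp only [Finset.mem_range] at ht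
    have hdict : (t % n) < n / 2 := by
      have : t % n = t := Nat.mod_eq_of_lt (by omega)
      omega
    have hw : tsd (show 0 < n by omega) (Equiv.refl (Fin n)) χ t
        (fun _ i => if (i : ℕ) < n / 2 then ({0} : Finset ℕ) else {1}) = 0 := by
      simp only [tsd, Equiv.refl_apply]
      simp only [hdict, ↓reduceIte]
      have := hχ {0} (by simp)
      simpa using this
    rw [hw, if_neg (by omega : ¬ ((i:ℕ) < n / 2))] at hwin
    simp at hwin
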